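/- For every integer b ≥ 0 and all n ≥ 0, the multi-poly-Bernoulli number B^{(−2,0,...,0)}_n with b trailing zeros equals 2·(3+b)^n − (2+b)^n. -/

import Mathlib

open Finset

noncomputable def altS (n m : ℕ) : ℝ :=
  ∑ j ∈ range (m + 1), (-1 : ℝ) ^ j * (m.choose j : ℝ) * (j : ℝ) ^ n

def dpS : ℕ → ℝ → ℝ
  | 0, _ => 1
  | m + 1, x => dpS m x * (x - m)

lemma altS_succ (n M : ℕ) :
    altS (n + 1) (M + 1)
      = -((M : ℝ) + 1) * ∑ i ∈ range (M + 1),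
          (-1 : ℝ) ^ i * (M.choose i : ℝ) * ((i : ℝ) + 1) ^ n := by
  rw [altS, sum_range_succ', mul_sum]
  have h0 : (-1 : ℝ) ^ 0 * (((M+1).choose 0 : ℕ) : ℝ) * ((0:ℕ) : ℝ) ^ (n+1) = 0 := by
    simp
  rw [h0, add_zero]
  refine sum_congr rfl fun i _ => ?_
  have h' : (((M+1).choose (i+1) : ℕ) : ℝ) * ((i:ℝ)+1) = ((M:ℝ)+1) * ((M.choose i : ℕ) : ℝ) := by
    exact_mod_cast (Nat.add_one_mul_choose_eq M i).symm
  push_cast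
  linear_combination ((-1:ℝ)^(i+1) * ((i:ℝ)+1)^n) * h'

lemma altS_eq_zero : ∀ n m : ℕ, n < m → altS n m = 0 := by
  intro n
  induction n using Nat.strong_induction_on with
  | _ n ih =>
    match n with
    | 0 =>
      intro m hm
      have h1 : altS 0 m = ∑ j ∈ range (m+1), (-1:ℝ)^j * (m.choose j : ℝ) := by
        rw [altS]
        exact sum_congr rfl fun j _ => by rw [pow_zero, mul_one]
      have h2 : (((∑ j ∈ range (m+1), (-1:ℤ)^j * (m.choose j : ℤ)) : ℤ) : ℝ)
          = ∑ j ∈ range (m+1), (-1:ℝ)^j * (m.choose j : ℝ) := by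
        push_cast; rfl
      rw [h1, ← h2, Int.alternating_sum_range_choose, if_neg (by omega)]
      simp
    | n + 1 =>
      intro m hm
      match m, hm with
      | M + 1, hm =>
        rw [altS_succ]
        have hS : ∑ i ∈ range (M+1), (-1:ℝ)^i * (M.choose i : ℝ) * ((i:ℝ)+1)^n = 0 := by
          have step : ∑ i ∈ range (M+1), (-1:ℝ)^i * (M.choose i : ℝ) * ((i:ℝ)+1)^n
              = ∑ p ∈ range (n+1), (n.choose p : ℝ) * altS p M := by
            have hexp : ∀ i : ℕ, ((i:ℝ)+1)^n
                = ∑ p ∈ range (n+1), (i:ℝ)^p * (n.choose p : ℝ) := by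
              intro i
              rw [add_pow]
              exact sum_congr rfl fun p _ => by rw [one_pow, mul_one]
            calc ∑ i ∈ range (M+1), (-1:ℝ)^i * (M.choose i : ℝ) * ((i:ℝ)+1)^n
                = ∑ i ∈ range (M+1), ∑ p ∈ range (n+1),
                    (n.choose p : ℝ) * ((-1:ℝ)^i * (M.choose i : ℝ) * (i:ℝ)^p) := by
                  refine sum_congr rfl fun i _ => ?_
                  rw [hexp i, mul_sum]
                  exact sum_congr rfl fun p _ => by ring
              _ = ∑ p ∈ range (n+1), (n.choose p : ℝ) * altS p M := by
                  rw [sum_comm]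
                  exact sum_congr rfl fun p _ => by rw [altS, mul_sum]
          rw [step]
          refine sum_eq_zero fun p hp => ?_
          have hp' := Finset.mem_range.mp hp
          rw [ih p (by omega) M (by omega), mul_zero]
        rw [hS, mul_zero]

lemma altS_rec (n M : ℕ) (hn : 1 ≤ n) :
    altS (n + 1) (M + 1) = ((M : ℝ) + 1) * (altS n (M + 1) - altS n M) := by
  have hz : ∀ m : ℕ, (-1:ℝ)^0 * ((m.choose 0 : ℕ) : ℝ) * ((0:ℕ) : ℝ)^n = 0 := by
    intro m
    simp [zero_pow (by omega : n ≠ 0)]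
  have hA : altS n (M+1)
      = ∑ i ∈ range (M+1), (-1:ℝ)^(i+1) * (((M+1).choose (i+1) : ℕ) : ℝ) * (((i+1:ℕ)) : ℝ)^n := by
    rw [altS, sum_range_succ', hz, add_zero]
  have hB : altS n M
      = ∑ i ∈ range (M+1), (-1:ℝ)^(i+1) * ((M.choose (i+1) : ℕ) : ℝ) * (((i+1:ℕ)) : ℝ)^n := by
    rw [altS, sum_range_succ', hz, add_zero, sum_range_succ, Nat.choose_succ_self]
    simp
  rw [altS_succ, hA, hB, ← sum_sub_distrib, mul_sum, mul_sum]
  refine sum_congr rfl fun i _ => ?_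
  have hP : (((M+1).choose (i+1) : ℕ) : ℝ) = ((M.choose i : ℕ) : ℝ) + ((M.choose (i+1) : ℕ) : ℝ) := by
    exact_mod_cast congrArg (Nat.cast (R := ℝ)) (Nat.choose_succ_succ M i)
  push_cast
  linear_combination (((M:ℝ)+1) * (-1:ℝ)^i * ((i:ℝ)+1)^n) * hP

lemma newtonS : ∀ n : ℕ, 1 ≤ n → ∀ x : ℝ,
    x ^ n = ∑ m ∈ range (n + 1),
      (-1 : ℝ) ^ m * altS n m / (m.factorial : ℝ) * dpS m x := by
  intro n
  induction n with
  | zero => omega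
  | succ n ihn =>
    intro _ x
    rcases Nat.eq_zero_or_pos n with hn | hn1
    · subst hn
      simp [altS, dpS, sum_range_succ]
    · have key := ihn hn1 x
      have hx : ∀ m : ℕ, dpS m x * x = dpS (m+1) x + (m:ℝ) * dpS m x := by
        intro m
        show dpS m x * x = dpS m x * (x - m) + (m:ℝ) * dpS m x
        ring
      -- expand LHS
      have step1 : x ^ (n+1)
          = ∑ m ∈ range (n+1), ((-1:ℝ)^m * altS n m / (m.factorial : ℝ) * dpS (m+1) x
              + (-1:ℝ)^m * altS n m / (m.factorial : ℝ) * (m:ℝ) * dpS m x) := by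
        rw [pow_succ, key, sum_mul]
        refine sum_congr rfl fun m _ => ?_
        rw [mul_assoc, hx m]
        ring
      rw [step1, sum_add_distrib]
      -- second summand: shift index
      have step2 : ∑ m ∈ range (n+1), (-1:ℝ)^m * altS n m / (m.factorial : ℝ) * (m:ℝ) * dpS m x
          = ∑ i ∈ range (n+1), (-1:ℝ)^(i+1) * altS n (i+1) / ((i+1).factorial : ℝ) * ((i:ℝ)+1) * dpS (i+1) x := by
        rw [sum_range_succ']
        rw [sum_range_succ (fun i => (-1:ℝ)^(i+1) * altS n (i+1) / ((i+1).factorial : ℝ) * ((i:ℝ)+1) * dpS (i+1) x)]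
        rw [altS_eq_zero n (n+1) (by omega)]
        push_cast
        simp
      rw [step2, ← sum_add_distrib]
      -- target side
      rw [sum_range_succ' (fun m => (-1:ℝ)^m * altS (n+1) m / ((m.factorial : ℕ) : ℝ) * dpS m x) (n+1)]
      have h0 : (-1:ℝ)^0 * altS (n+1) 0 / ((Nat.factorial 0 : ℕ) : ℝ) * dpS 0 x = 0 := by
        have : altS (n+1) 0 = 0 := by
          simp [altS, zero_pow (by omega : n + 1 ≠ 0)]
        rw [this]
        simp
      rw [h0, add_zero]
      refine sum_congr rfl fun i _ => ?_
      rw [altS_rec n i hn1, Nat.factorial_succ]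
      have hf : ((i.factorial : ℕ) : ℝ) ≠ 0 := by
        exact_mod_cast i.factorial_ne_zero
      have hi : ((i:ℝ)+1) ≠ 0 := by positivity
      push_cast
      field_simp
      ring

lemma dpS_eval (r : ℕ) : ∀ m : ℕ,
    dpS m (-((r : ℝ) + 1)) = (-1 : ℝ) ^ m * ((r + m).choose m : ℝ) * (m.factorial : ℝ)
  | 0 => by simp [dpS]
  | m + 1 => by
    have ih := dpS_eval r m
    have h : (((r+m+1).choose (m+1) : ℕ) : ℝ) * ((m:ℝ)+1)
        = ((r:ℝ) + (m:ℝ) + 1) * (((r+m).choose m : ℕ) : ℝ) := by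
      exact_mod_cast (Nat.add_one_mul_choose_eq (r+m) m).symm
    show dpS m (-((r : ℝ) + 1)) * (-((r : ℝ) + 1) - (m:ℝ)) = _
    rw [ih, Nat.factorial_succ]
    have : r + (m+1) = r + m + 1 := rfl
    rw [this]
    push_cast
    linear_combination ((-1:ℝ)^m * (m.factorial : ℝ)) * h

lemma keyL (r n : ℕ) :
    ∑ m ∈ range (n + 1), ((r + m).choose m : ℝ) * altS n m
      = (-1 : ℝ) ^ n * ((r : ℝ) + 1) ^ n := by
  rcases Nat.eq_zero_or_pos n with h | h
  · subst h
    simp [altS]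
  · calc ∑ m ∈ range (n + 1), ((r + m).choose m : ℝ) * altS n m
        = ∑ m ∈ range (n + 1),
            (-1:ℝ)^m * altS n m / (m.factorial : ℝ) * dpS m (-((r:ℝ)+1)) := by
          refine sum_congr rfl fun m _ => ?_
          rw [dpS_eval]
          have hf : ((m.factorial : ℕ) : ℝ) ≠ 0 := by exact_mod_cast m.factorial_ne_zero
          have hs : (-1:ℝ)^m * (-1:ℝ)^m = 1 := by
            rw [← pow_add, ← two_mul, pow_mul]
            norm_num
          field_simp
          linear_combination (-(altS n m * ((r + m).choose m : ℝ))) * hs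
      _ = (-((r:ℝ)+1)) ^ n := (newtonS n h _).symm
      _ = (-1 : ℝ) ^ n * ((r : ℝ) + 1) ^ n := by rw [neg_pow]

/-- `chain b t = \sum_{0<s_1<\dots<s_b<t} s_1^2` (for `b = 0` just `t^2`): the weight of
strictly increasing chains of length `b+1` with top element `t`, coming from the
multiple polylogarithm `Li_{-2,0,\dots,0}(x) = \sum_{0<s_1<\dots<s_{b+1}} s_1^2 x^{s_{b+1}}`. -/
def chain : ℕ → ℕ → ℕ
  | 0, t => t ^ 2
  | b + 1, t => ∑ s ∈ Finset.range t, chain b s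

lemma sum_range_choose_eq (k : ℕ) : ∀ t : ℕ, ∑ s ∈ range t, s.choose k = t.choose (k+1)
  | 0 => by simp
  | t + 1 => by
    rw [sum_range_succ, sum_range_choose_eq k t]
    have h := Nat.choose_succ_succ t k
    simp only [Nat.succ_eq_add_one] at h
    omega

lemma chain_eq : ∀ b t : ℕ, chain b t = (t+1).choose (b+2) + t.choose (b+2)
  | 0, t => by
    show t ^ 2 = (t+1).choose 2 + t.choose 2
    induction t with
    | zero => simp
    | succ t ih =>
      have h1 := Nat.choose_succ_succ (t+1) 1
      have h2 := Nat.choose_succ_succ t 1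
      simp only [Nat.succ_eq_add_one, Nat.reduceAdd, Nat.choose_one_right] at h1 h2
      have h5 : (t+1)^2 = t^2 + 2*t + 1 := by ring
      omega
  | b + 1, t => by
    show (∑ s ∈ range t, chain b s) = _
    have h1 : ∑ s ∈ range t, chain b s
        = (∑ s ∈ range t, (s+1).choose (b+2)) + ∑ s ∈ range t, s.choose (b+2) := by
      rw [← sum_add_distrib]
      exact sum_congr rfl fun s _ => chain_eq b s
    have h2 : ∑ s ∈ range t, (s+1).choose (b+2) = (t+1).choose (b+2+1) := by
      have h3 := sum_range_succ' (fun s => s.choose (b+2)) t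
      rw [sum_range_choose_eq (b+2) (t+1)] at h3
      have h4 : (0:ℕ).choose (b+2) = 0 := Nat.choose_eq_zero_of_lt (by omega)
      omega
    rw [h1, h2, sum_range_choose_eq]

lemma chain_cast (b m : ℕ) :
    (chain b (b+1+m) : ℝ) = 2 * (((b+2)+m).choose m : ℝ) - (((b+1)+m).choose m : ℝ) := by
  have key : chain b (b+1+m) + (b+1+m).choose m = 2 * ((b+2+m).choose m) := by
    rw [chain_eq]
    have s1 : (b+2+m).choose m = (b+2+m).choose (b+2) := by
      have h := Nat.choose_symm (n := b+2+m) (k := m) (by omega)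
      rw [show b+2+m-m = b+2 from by omega] at h
      exact h.symm
    have s2 : (b+1+m).choose m = (b+1+m).choose (b+1) := by
      have h := Nat.choose_symm (n := b+1+m) (k := m) (by omega)
      rw [show b+1+m-m = b+1 from by omega] at h
      exact h.symm
    have f1 : (b+1+m+1).choose (b+2) = (b+1+m).choose (b+1) + (b+1+m).choose (b+2) :=
      Nat.choose_succ_succ (b+1+m) (b+1)
    have f2 : b+2+m = b+1+m+1 := by omega
    rw [s1, s2, f2, f1]
    omega
  have := congrArg (Nat.cast (R := ℝ)) key
  push_cast at this ⊢
  linarith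

/-- The multi-poly-Bernoulli number `B^{(-2,0,...,0)}_n` (with `b` trailing zeros), defined by
`\sum_n B_n m^n/n! = Li_{-2,0,\dots,0}(1-e^{-m})/(1-e^{-m})^{b+1}
 = \sum_t chain b t · (1-e^{-m})^{t-(b+1)}`; extracting the coefficient of `m^n/n!` of
`(1-e^{-m})^{t-(b+1)} = \sum_i C(t-(b+1),i)(-1)^i e^{-im}` term by term gives this
(finitely supported, hence convergent) series. -/
noncomputable def multiPolyBernoulli (b n : ℕ) : ℝ :=
  ∑' t : ℕ, (chain b t : ℝ) *
    ∑ i ∈ Finset.range (t - (b + 1) + 1),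
      ((t - (b + 1)).choose i : ℝ) * (-1) ^ i * (-(i : ℝ)) ^ n

theorem stmt13 (b n : ℕ) :
    multiPolyBernoulli b n = 2 * ((3 : ℝ) + b) ^ n - ((2 : ℝ) + b) ^ n := by
  have hinner : ∀ t : ℕ,
      (∑ i ∈ Finset.range (t - (b + 1) + 1),
        ((t - (b + 1)).choose i : ℝ) * (-1) ^ i * (-(i : ℝ)) ^ n)
      = (-1:ℝ)^n * altS n (t - (b+1)) := by
    intro t
    rw [altS, mul_sum]
    refine sum_congr rfl fun i _ => ?_
    rw [neg_pow]
    ring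
  set f : ℕ → ℝ := fun t => (chain b t : ℝ) *
      ∑ i ∈ Finset.range (t - (b + 1) + 1),
        ((t - (b + 1)).choose i : ℝ) * (-1) ^ i * (-(i : ℝ)) ^ n with hf
  have hzero : ∀ t ∉ range (n + b + 2), f t = 0 := by
    intro t ht
    simp only [Finset.mem_range, not_lt] at ht
    rw [hf]
    simp only []
    rw [hinner t, altS_eq_zero n (t - (b+1)) (by omega), mul_zero, mul_zero]
  rw [multiPolyBernoulli]
  rw [show (∑' t : ℕ, (chain b t : ℝ) *
      ∑ i ∈ Finset.range (t - (b + 1) + 1),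
        ((t - (b + 1)).choose i : ℝ) * (-1) ^ i * (-(i : ℝ)) ^ n) = ∑' t, f t from rfl]
  rw [tsum_eq_sum hzero]
  have hsplit := Finset.sum_Ico_consecutive f (Nat.zero_le (b+1)) (by omega : b+1 ≤ n+b+2)
  rw [range_eq_Ico, ← hsplit]
  have hfirst : ∑ t ∈ Finset.Ico 0 (b+1), f t = 0 := by
    refine sum_eq_zero fun t ht => ?_
    have ht' : t < b + 1 := (Finset.mem_Ico.mp ht).2
    have hc : chain b t = 0 := by
      rw [chain_eq]
      have h1 : (t+1).choose (b+2) = 0 := Nat.choose_eq_zero_of_lt (by omega)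
      have h2 : t.choose (b+2) = 0 := Nat.choose_eq_zero_of_lt (by omega)
      omega
    rw [hf]
    simp [hc]
  rw [hfirst, zero_add, Finset.sum_Ico_eq_sum_range,
    show n + b + 2 - (b+1) = n + 1 from by omega]
  have hterm : ∀ m : ℕ, f (b+1+m)
      = (2 * (((b+2)+m).choose m : ℝ) - (((b+1)+m).choose m : ℝ)) * ((-1:ℝ)^n * altS n m) := by
    intro m
    rw [hf]
    simp only []
    rw [hinner (b+1+m), show (b+1+m) - (b+1) = m from by omega, chain_cast b m]
  rw [sum_congr rfl fun m _ => hterm m]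
  have expand : ∑ m ∈ range (n+1),
      (2 * (((b+2)+m).choose m : ℝ) - (((b+1)+m).choose m : ℝ)) * ((-1:ℝ)^n * altS n m)
      = (-1:ℝ)^n * (2 * (∑ m ∈ range (n+1), (((b+2)+m).choose m : ℝ) * altS n m)
          - ∑ m ∈ range (n+1), (((b+1)+m).choose m : ℝ) * altS n m) := by
    rw [mul_sub, mul_sum, mul_sum, mul_sum, ← sum_sub_distrib]
    refine sum_congr rfl fun m _ => by ring
  rw [expand, keyL (b+2) n, keyL (b+1) n]
  have hs : (-1:ℝ)^n * (-1:ℝ)^n = 1 := by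
    rw [← pow_add, ← two_mul, pow_mul]
    norm_num
  push_cast
  linear_combination (2*((b:ℝ)+3)^n - ((b:ℝ)+2)^n) * hs
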